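/- The automaton generating the lamplighter group (ψ(a)=(a,b), ψ(b)=(b,a)σ over A={0,1}) is not contracting: the element a has infinite order in ⟨Π⟩, and the section (iterated transition) of aⁿ at the vertex 0^k equals a^n-related elements whose word lengths do not remain bounded; concretely, τ(0, a) = a, so a is a state of itself at vertex 0 for all iterates, while a has infinite order, hence no finite set N satisfies the contraction property for all powers of a. -/

import Mathlib

/-- The transformation of `A*` induced by an automaton at state `q`. -/
def act {A Q : Type*} (σ : A → Q → A) (τ : A → Q → Q) : Q → List A → List A
  | _, [] => []
  | q, a :: w => σ a q :: act σ τ (τ a q) w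

/-- The section of a tree map `g` at the word `w`. -/
def sectionFn {A : Type*} (g : List A → List A) (w : List A) : List A → List A :=
  fun v => (g (w ++ v)).drop w.length

/-- Output function of the lamplighter automaton (`false` = `a`, `true` = `b`). -/
def llOut : Bool → Bool → Bool := fun x q => if q then !x else x

/-- Transition function of the lamplighter automaton: `ψ(a)=(a,b)`, `ψ(b)=(b,a)σ`. -/
def llTrans : Bool → Bool → Bool := fun x q => if q then !x else x

/- ### Auxiliary machinery -/

/-- Abbreviation for the action of the generator `a`. -/
abbrev fA : List Bool → List Bool := act llOut llTrans false

/-- "Multiplication by (1+t)": the inverse of the prefix-xor map `fA`. -/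
def gmul : Bool → List Bool → List Bool
  | _, [] => []
  | q, a :: w => (xor a q) :: gmul a w

lemma act_gmul (w : List Bool) : ∀ q, act llOut llTrans q (gmul q w) = w := by
  induction w with
  | nil => intro q; rfl
  | cons a w ih =>
      intro q
      cases a <;> cases q <;> simp [act, gmul, llOut, llTrans, ih]

lemma gmul_concat (x : List Bool) :
    ∀ q a, gmul q (x ++ [a]) = gmul q x ++ [xor a (x.getLastD q)] := by
  induction x with
  | nil => intro q a; simp [gmul]
  | cons b t ih =>
      intro q a
      simp only [List.cons_append, gmul, List.append_eq, ih b a, List.getLastD_cons]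

/-- Padded Pascal rows: `Bp d n` is the coefficient list of `(1+t)^d`
followed by `n` zeros. -/
def Bp : ℕ → ℕ → List Bool
  | 0, n => true :: List.replicate n false
  | d+1, n => gmul false (Bp d (n+1))

lemma Bp_pad : ∀ d n, Bp d (n+1) = Bp d n ++ [false] := by
  intro d
  induction d with
  | zero => intro n; simp [Bp, List.replicate_succ']
  | succ d ih =>
      intro n
      have h1 : Bp d (n+2) = Bp d (n+1) ++ [false] := ih (n+1)
      have h2 : (Bp d (n+1)).getLastD false = false := by
        rw [ih n]; simp
      calc Bp (d+1) (n+1) = gmul false (Bp d (n+1) ++ [false]) := by rw [Bp, h1]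
        _ = gmul false (Bp d (n+1)) ++ [xor false ((Bp d (n+1)).getLastD false)] :=
            gmul_concat _ _ _
        _ = Bp (d+1) n ++ [false] := by rw [h2]; simp [Bp]

lemma Bp_last : ∀ d, (Bp d 0).getLastD false = true := by
  intro d
  induction d with
  | zero => rfl
  | succ d ih =>
      have : Bp (d+1) 0 = gmul false (Bp d 0 ++ [false]) := by rw [Bp, Bp_pad]
      rw [this, gmul_concat, ih]
      simp

lemma iter_Bp : ∀ d n, fA^[d] (Bp d n) = true :: List.replicate (n + d) false := by
  intro d
  induction d with
  | zero => intro n; simp [Bp]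
  | succ d ih =>
      intro n
      have : fA (Bp (d+1) n) = Bp d (n+1) := act_gmul _ _
      rw [Function.iterate_succ_apply, this, ih (n+1)]
      ring_nf

lemma iter_eq_id (d : ℕ) (h : ∀ x, fA^[d] x = x) : d = 0 := by
  by_contra hd
  obtain ⟨e, rfl⟩ := Nat.exists_eq_succ_of_ne_zero hd
  have h1 : Bp (e+1) 0 = true :: List.replicate (e+1) false := by
    have := iter_Bp (e+1) 0
    rw [h (Bp (e+1) 0)] at this
    simpa using this
  have h2 := Bp_last (e+1)
  rw [h1] at h2
  have hrep : List.replicate (e+1) false = List.replicate e false ++ [false] := by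
    simp [List.replicate_succ']
  rw [hrep, List.getLastD_cons, List.getLastD_concat] at h2
  exact Bool.false_ne_true h2

lemma act_inj : ∀ (x y : List Bool) (q : Bool),
    act llOut llTrans q x = act llOut llTrans q y → x = y := by
  intro x
  induction x with
  | nil =>
      intro y q h
      cases y with
      | nil => rfl
      | cons b s => simp [act] at h
  | cons a t ih =>
      intro y q h
      cases y with
      | nil => simp [act] at h
      | cons b s =>
          simp only [act, List.cons.injEq] at h
          have hab : a = b := by
            cases a <;> cases b <;> cases q <;> simp_all [llOut]
          subst hab
          exact congrArg (a :: ·) (ih s _ h.2)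

lemma fA_inj : Function.Injective fA := fun x y h => act_inj x y false h

lemma act_zeros_append (v : List Bool) :
    ∀ n, fA (List.replicate n false ++ v) = List.replicate n false ++ fA v := by
  intro n
  induction n with
  | zero => simp
  | succ n ih => simp [List.replicate_succ, act, llOut, llTrans, ih]

lemma iter_zeros (k n : ℕ) (v : List Bool) :
    fA^[k] (List.replicate n false ++ v) = List.replicate n false ++ fA^[k] v := by
  induction k with
  | zero => simp
  | succ k ih =>
      rw [Function.iterate_succ_apply', ih, act_zeros_append,
        ← Function.iterate_succ_apply' fA k v]

lemma section_zeros (k n : ℕ) :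
    sectionFn (fA^[k]) (List.replicate n false) = fA^[k] := by
  funext v
  simp only [sectionFn, iter_zeros]
  rw [← (List.length_replicate : (List.replicate n false).length = n), List.drop_left]

/-- The lamplighter automaton is not contracting: the generator `a` has infinite
order (its powers are pairwise distinct transformations of `A*`), and no finite
set `N` satisfies the contraction property for all powers of `a`. -/
theorem lamplighter_not_contracting :
    Function.Injective (fun n : ℕ => (act llOut llTrans false)^[n]) ∧
      ¬ ∃ N : Set (List Bool → List Bool), N.Finite ∧
          ∀ k : ℕ, ∃ n : ℕ, ∀ w : List Bool, w.length = n →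
            sectionFn ((act llOut llTrans false)^[k]) w ∈ N := by
  have hinj : Function.Injective (fun n : ℕ => (act llOut llTrans false)^[n]) := by
    intro m n h
    simp only at h
    wlog hmn : m ≤ n generalizing m n
    · exact (this h.symm (le_of_not_ge hmn)).symm
    obtain ⟨d, rfl⟩ := Nat.exists_eq_add_of_le hmn
    have hd : ∀ x, fA^[d] x = x := by
      intro x
      have hx := congrFun h x
      rw [Function.iterate_add_apply] at hx
      exact ((fA_inj.iterate m) hx.symm)
    have : d = 0 := iter_eq_id d hd
    omega
  refine ⟨hinj, ?_⟩
  rintro ⟨N, hfin, hN⟩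
  have hmem : ∀ k : ℕ, (fun n : ℕ => (act llOut llTrans false)^[n]) k ∈ N := by
    intro k
    obtain ⟨n, hn⟩ := hN k
    have := hn (List.replicate n false) List.length_replicate
    rwa [section_zeros] at this
  exact (Set.infinite_of_injective_forall_mem hinj hmem) hfin
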